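/- Let Z ⊂ Y ⊂ X be closed subspaces with Y of finite codimension in X. If (X,Y) has the CQLP, then (X/Z, Y/Z) has the CQLP. -/

import Mathlib

open Submodule

-- key isometry lemma
lemma key_norm {X : Type*} [NormedAddCommGroup X] [NormedSpace ℝ X]
    (Y Z : Submodule ℝ X) (hZY : Z ≤ Y) (x : X) :
    ‖(Submodule.Quotient.mk (Submodule.Quotient.mk x : X ⧸ Z) :
        (X ⧸ Z) ⧸ (Y.map Z.mkQ))‖ = ‖(Submodule.Quotient.mk x : X ⧸ Y)‖ := by
  apply le_antisymm
  · refine le_of_forall_pos_le_add fun ε hε => ?_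
    obtain ⟨a, ha, hna⟩ := Submodule.Quotient.norm_mk_lt (Submodule.Quotient.mk x : X ⧸ Y) hε
    have hay : a - x ∈ Y := (Submodule.Quotient.eq Y).1 ha
    have heq : (Submodule.Quotient.mk (Submodule.Quotient.mk a : X ⧸ Z) :
        (X ⧸ Z) ⧸ (Y.map Z.mkQ)) = Submodule.Quotient.mk (Submodule.Quotient.mk x : X ⧸ Z) := by
      rw [Submodule.Quotient.eq]
      exact ⟨a - x, hay, by simp [Submodule.Quotient.mk_sub]⟩
    calc ‖(Submodule.Quotient.mk (Submodule.Quotient.mk x : X ⧸ Z) :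
        (X ⧸ Z) ⧸ (Y.map Z.mkQ))‖
        = ‖(Submodule.Quotient.mk (Submodule.Quotient.mk a : X ⧸ Z) :
        (X ⧸ Z) ⧸ (Y.map Z.mkQ))‖ := by rw [heq]
      _ ≤ ‖(Submodule.Quotient.mk a : X ⧸ Z)‖ := Submodule.Quotient.norm_mk_le _ _
      _ ≤ ‖a‖ := Submodule.Quotient.norm_mk_le _ _
      _ ≤ ‖(Submodule.Quotient.mk x : X ⧸ Y)‖ + ε := hna.le
  · refine le_of_forall_pos_le_add fun ε hε => ?_
    obtain ⟨q, hq, hnq⟩ := Submodule.Quotient.norm_mk_lt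
      (Submodule.Quotient.mk (Submodule.Quotient.mk x : X ⧸ Z) :
        (X ⧸ Z) ⧸ (Y.map Z.mkQ)) (half_pos hε)
    obtain ⟨b, hb, hnb⟩ := Submodule.Quotient.norm_mk_lt q (half_pos hε)
    have hmem : (Submodule.Quotient.mk b - Submodule.Quotient.mk x : X ⧸ Z) ∈ Y.map Z.mkQ := by
      rw [← Submodule.Quotient.eq, hb, hq]
    obtain ⟨y, hy, hyeq⟩ := hmem
    have hbx : b - x ∈ Y := by
      have : y - (b - x) ∈ Z := by
        rw [← Submodule.Quotient.mk_eq_zero Z]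
        have : (Submodule.Quotient.mk y : X ⧸ Z) = Submodule.Quotient.mk (b - x) := by
          simpa [Submodule.mkQ_apply, Submodule.Quotient.mk_sub] using hyeq
        simp [Submodule.Quotient.mk_sub, this]
      have := Y.sub_mem hy (hZY this)
      simpa using this
    have hbq : (Submodule.Quotient.mk b : X ⧸ Y) = Submodule.Quotient.mk x :=
      (Submodule.Quotient.eq Y).2 hbx
    calc ‖(Submodule.Quotient.mk x : X ⧸ Y)‖ = ‖(Submodule.Quotient.mk b : X ⧸ Y)‖ := by
          rw [hbq]
      _ ≤ ‖b‖ := Submodule.Quotient.norm_mk_le _ _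
      _ ≤ ‖q‖ + ε/2 := hnb.le
      _ ≤ (‖(Submodule.Quotient.mk (Submodule.Quotient.mk x : X ⧸ Z) :
        (X ⧸ Z) ⧸ (Y.map Z.mkQ))‖ + ε/2) + ε/2 := by linarith
      _ = _ := by ring

/-- (X,J) has the compact quotient lifting property (CQLP). -/
def HasCQLP (X : Type*) [NormedAddCommGroup X] [NormedSpace ℝ X] (J : Submodule ℝ X) : Prop :=
  ∀ (Z : Type) [NormedAddCommGroup Z] [NormedSpace ℝ Z] [CompleteSpace Z]
    (T : Z →L[ℝ] X ⧸ J), IsCompactOperator T → ∃ S : Z →L[ℝ] X, IsCompactOperator S ∧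
      (∀ z : Z, (Submodule.Quotient.mk (S z) : X ⧸ J) = T z) ∧ ‖S‖ = ‖T‖

/-- Let Z ⊆ Y ⊆ X be closed subspaces with Y of finite codimension in X.
If (X,Y) has the CQLP, then (X/Z, Y/Z) has the CQLP. -/
theorem stmt_11 (X : Type*) [NormedAddCommGroup X] [NormedSpace ℝ X] [CompleteSpace X]
    (Y Z : Submodule ℝ X) (hZY : Z ≤ Y)
    (hY : IsClosed (Y : Set X)) (hZ : IsClosed (Z : Set X))
    (hfin : FiniteDimensional ℝ (X ⧸ Y))
    (h : HasCQLP X Y) :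
    HasCQLP (X ⧸ Z) ((Submodule.map Z.mkQ Y : Submodule ℝ (X ⧸ Z))) := by
  intro W _ _ _ T hT
  let e := Submodule.quotientQuotientEquivQuotient Z Y hZY
  have he : ∀ x : X, e (Submodule.Quotient.mk (Submodule.Quotient.mk x : X ⧸ Z)) =
      Submodule.Quotient.mk x := fun x =>
    Submodule.quotientQuotientEquivQuotientAux_mk_mk Z Y hZY x
  have hiso : ∀ p : (X ⧸ Z) ⧸ (Y.map Z.mkQ), ‖e p‖ = ‖p‖ := by
    intro p
    obtain ⟨q, rfl⟩ := Submodule.Quotient.mk_surjective (Y.map Z.mkQ) p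
    obtain ⟨x, rfl⟩ := Submodule.Quotient.mk_surjective Z q
    rw [he x, key_norm Y Z hZY x]
  let eL : ((X ⧸ Z) ⧸ (Y.map Z.mkQ)) →L[ℝ] X ⧸ Y :=
    LinearMap.mkContinuous e.toLinearMap 1 (fun p => by simp [hiso p])
  have heL : ∀ p, eL p = e p := fun p => rfl
  obtain ⟨S, hScomp, hSlift, hSnorm⟩ := h W (eL.comp T)
    (by simpa [ContinuousLinearMap.coe_comp] using hT.clm_comp eL)
  let π : X →L[ℝ] X ⧸ Z :=
    LinearMap.mkContinuous Z.mkQ 1 (fun x => by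
      simpa using Submodule.Quotient.norm_mk_le Z x)
  have hlift : ∀ w : W, (Submodule.Quotient.mk ((π.comp S) w) :
      (X ⧸ Z) ⧸ (Y.map Z.mkQ)) = T w := by
    intro w
    have h1 : e (Submodule.Quotient.mk (π (S w))) = Submodule.Quotient.mk (S w) := he (S w)
    have h2 : e (T w) = Submodule.Quotient.mk (S w) := by
      rw [← heL, ← ContinuousLinearMap.comp_apply, hSlift w]
    exact e.injective (h1.trans h2.symm)
  have hTnorm : ‖eL.comp T‖ = ‖T‖ := by
    apply le_antisymm
    · refine ContinuousLinearMap.opNorm_le_bound _ (ContinuousLinearMap.opNorm_nonneg _) fun w => ?_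
      rw [ContinuousLinearMap.comp_apply, heL, hiso]
      exact T.le_opNorm w
    · refine ContinuousLinearMap.opNorm_le_bound _ (ContinuousLinearMap.opNorm_nonneg _) fun w => ?_
      have : ‖T w‖ = ‖(eL.comp T) w‖ := by
        rw [ContinuousLinearMap.comp_apply, heL, hiso]
      rw [this]
      exact (eL.comp T).le_opNorm w
  refine ⟨π.comp S, by simpa [ContinuousLinearMap.coe_comp] using hScomp.clm_comp π,
    hlift, ?_⟩
  apply le_antisymm
  · refine ContinuousLinearMap.opNorm_le_bound _ (ContinuousLinearMap.opNorm_nonneg _) fun w => ?_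
    calc ‖(π.comp S) w‖ ≤ ‖S w‖ := by
          exact Submodule.Quotient.norm_mk_le Z (S w)
      _ ≤ ‖S‖ * ‖w‖ := S.le_opNorm w
      _ = ‖T‖ * ‖w‖ := by rw [hSnorm, hTnorm]
  · refine ContinuousLinearMap.opNorm_le_bound _ (ContinuousLinearMap.opNorm_nonneg _) fun w => ?_
    calc ‖T w‖ = ‖(Submodule.Quotient.mk ((π.comp S) w) :
          (X ⧸ Z) ⧸ (Y.map Z.mkQ))‖ := by rw [hlift w]
      _ ≤ ‖(π.comp S) w‖ := Submodule.Quotient.norm_mk_le _ _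
      _ ≤ ‖π.comp S‖ * ‖w‖ := (π.comp S).le_opNorm w
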